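/- Let C be a compact convex subset of ℝ² with positive area, let P be a point, and let A(θ) = area(C ∩ H(P,θ)) with H(P,θ) = {x : ⟨x − P, (−sin θ, cos θ)⟩ ≥ 0}. Suppose α < β with β − α < π, A(α) = 0 and A(β) = area(C). Then for every t with 0 < t < 1 there exists a unique θ ∈ [α, β] such that A(θ) = t · area(C): the line through P cutting off any prescribed proper fraction of the area, within one sweep, is unique. -/

import Mathlib

open MeasureTheory
open scoped RealInnerProductSpace ENNReal

/-- coordinate function for the sweep -/
noncomputable def sweepF (P x : EuclideanSpace ℝ (Fin 2)) (θ : ℝ) : ℝ :=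
  (x 1 - P 1) * Real.cos θ - (x 0 - P 0) * Real.sin θ

lemma abs_sin_sub_sin_le (a b : ℝ) : |Real.sin a - Real.sin b| ≤ |a - b| := by
  rw [Real.sin_sub_sin]
  have h1 : |Real.sin ((a - b) / 2)| ≤ |(a - b) / 2| := Real.abs_sin_le_abs
  have h2 : |Real.cos ((a + b) / 2)| ≤ 1 := Real.abs_cos_le_one _
  rw [abs_mul, abs_mul]
  have h3 : |(a - b) / 2| = |a - b| / 2 := by rw [abs_div]; norm_num
  have h4 : |Real.sin ((a - b) / 2)| * |Real.cos ((a + b) / 2)| ≤ |(a - b) / 2| * 1 :=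
    mul_le_mul h1 h2 (abs_nonneg _) (abs_nonneg _)
  have : |(2:ℝ)| = 2 := by norm_num
  rw [this]
  rw [h3] at h4
  linarith

lemma abs_cos_sub_cos_le (a b : ℝ) : |Real.cos a - Real.cos b| ≤ |a - b| := by
  rw [Real.cos_sub_cos]
  have h1 : |Real.sin ((a - b) / 2)| ≤ |(a - b) / 2| := Real.abs_sin_le_abs
  have h2 : |Real.sin ((a + b) / 2)| ≤ 1 := Real.abs_sin_le_one _
  rw [abs_mul, abs_mul]
  have h3 : |(a - b) / 2| = |a - b| / 2 := by rw [abs_div]; norm_num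
  have h4 : |Real.sin ((a + b) / 2)| * |Real.sin ((a - b) / 2)| ≤ 1 * |(a - b) / 2| :=
    mul_le_mul h2 h1 (abs_nonneg _) (by norm_num)
  have : |(-2:ℝ)| = 2 := by norm_num
  rw [this]
  rw [h3] at h4
  linarith

/-- once the sweeping line has passed a point it stays past it -/
lemma sweep_key (u v a t1 t2 : ℝ) (h1 : a < t1) (h2 : t1 ≤ t2) (h3 : t2 - a < Real.pi)
    (ha : v * Real.cos a - u * Real.sin a < 0)
    (h4 : 0 ≤ v * Real.cos t1 - u * Real.sin t1) :
    0 ≤ v * Real.cos t2 - u * Real.sin t2 := by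
  have key : Real.sin (t1 - a) * (v * Real.cos t2 - u * Real.sin t2)
      = Real.sin (t2 - a) * (v * Real.cos t1 - u * Real.sin t1)
        - Real.sin (t2 - t1) * (v * Real.cos a - u * Real.sin a) := by
    rw [Real.sin_sub, Real.sin_sub, Real.sin_sub]; ring
  have hs1 : 0 < Real.sin (t1 - a) :=
    Real.sin_pos_of_pos_of_lt_pi (by linarith) (by linarith)
  have hs2 : 0 < Real.sin (t2 - a) :=
    Real.sin_pos_of_pos_of_lt_pi (by linarith) (by linarith)
  have hs3 : 0 ≤ Real.sin (t2 - t1) :=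
    Real.sin_nonneg_of_nonneg_of_le_pi (by linarith) (by linarith)
  nlinarith [mul_nonneg hs2.le h4, mul_nonneg hs3 (neg_nonneg.mpr ha.le)]

/-- before the sweeping line reaches a point it has not passed it -/
lemma sweep_key' (u v b t1 t2 : ℝ) (h1 : t2 < b) (h2 : t1 ≤ t2) (h3 : b - t1 < Real.pi)
    (hb : 0 ≤ v * Real.cos b - u * Real.sin b)
    (h4 : v * Real.cos t2 - u * Real.sin t2 < 0) :
    v * Real.cos t1 - u * Real.sin t1 < 0 := by
  have key : Real.sin (b - t2) * (v * Real.cos t1 - u * Real.sin t1)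
      = Real.sin (b - t1) * (v * Real.cos t2 - u * Real.sin t2)
        - Real.sin (t2 - t1) * (v * Real.cos b - u * Real.sin b) := by
    rw [Real.sin_sub, Real.sin_sub, Real.sin_sub]; ring
  have hs1 : 0 < Real.sin (b - t2) :=
    Real.sin_pos_of_pos_of_lt_pi (by linarith) (by linarith)
  have hs2 : 0 < Real.sin (b - t1) :=
    Real.sin_pos_of_pos_of_lt_pi (by linarith) (by linarith)
  have hs3 : 0 ≤ Real.sin (t2 - t1) :=
    Real.sin_nonneg_of_nonneg_of_le_pi (by linarith) (by linarith)
  nlinarith [mul_pos hs2 (neg_pos.mpr h4), mul_nonneg hs3 hb]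

lemma sweep_det_pos (ua va ub vb a t1 t2 b : ℝ)
    (hat1 : a < t1) (h12 : t1 < t2) (ht2b : t2 < b) (hab : b - a < Real.pi)
    (hYa : va * Real.cos a - ua * Real.sin a < 0)
    (hXa : 0 ≤ va * Real.cos t1 - ua * Real.sin t1)
    (hYb : vb * Real.cos t2 - ub * Real.sin t2 < 0)
    (hXb : 0 ≤ vb * Real.cos b - ub * Real.sin b) :
    0 < ua * vb - va * ub := by
  have key : Real.sin (t1 - a) * Real.sin (b - t2) * (ua * vb - va * ub)
      = (ua * Real.sin t1 - va * Real.cos t1) * (ub * Real.sin b - vb * Real.cos b)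
          * Real.sin (t2 - a)
        + (ua * Real.sin t1 - va * Real.cos t1) * (vb * Real.cos t2 - ub * Real.sin t2)
          * Real.sin (b - a)
        + (va * Real.cos a - ua * Real.sin a) * (ub * Real.sin b - vb * Real.cos b)
          * Real.sin (t2 - t1)
        + (va * Real.cos a - ua * Real.sin a) * (vb * Real.cos t2 - ub * Real.sin t2)
          * Real.sin (b - t1) := by
    rw [Real.sin_sub, Real.sin_sub, Real.sin_sub, Real.sin_sub, Real.sin_sub, Real.sin_sub]
    ring
  have hS1 : 0 < Real.sin (t1 - a) :=
    Real.sin_pos_of_pos_of_lt_pi (by linarith) (by linarith)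
  have hS2 : 0 < Real.sin (b - t2) :=
    Real.sin_pos_of_pos_of_lt_pi (by linarith) (by linarith)
  have h2a : 0 < Real.sin (t2 - a) :=
    Real.sin_pos_of_pos_of_lt_pi (by linarith) (by linarith)
  have hba : 0 < Real.sin (b - a) :=
    Real.sin_pos_of_pos_of_lt_pi (by linarith) (by linarith)
  have h21 : 0 < Real.sin (t2 - t1) :=
    Real.sin_pos_of_pos_of_lt_pi (by linarith) (by linarith)
  have hb1 : 0 < Real.sin (b - t1) :=
    Real.sin_pos_of_pos_of_lt_pi (by linarith) (by linarith)
  have hXa' : ua * Real.sin t1 - va * Real.cos t1 ≤ 0 := by linarith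
  have hXb' : ub * Real.sin b - vb * Real.cos b ≤ 0 := by linarith
  have t1' : 0 ≤ (ua * Real.sin t1 - va * Real.cos t1) * (ub * Real.sin b - vb * Real.cos b)
      * Real.sin (t2 - a) := mul_nonneg ((by nlinarith : (0:ℝ) ≤ (ua * Real.sin t1 - va * Real.cos t1) * (ub * Real.sin b - vb * Real.cos b))) h2a.le
  have t2' : 0 ≤ (ua * Real.sin t1 - va * Real.cos t1) * (vb * Real.cos t2 - ub * Real.sin t2)
      * Real.sin (b - a) := mul_nonneg ((by nlinarith : (0:ℝ) ≤ (ua * Real.sin t1 - va * Real.cos t1) * (vb * Real.cos t2 - ub * Real.sin t2))) hba.le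
  have t3' : 0 ≤ (va * Real.cos a - ua * Real.sin a) * (ub * Real.sin b - vb * Real.cos b)
      * Real.sin (t2 - t1) := mul_nonneg ((by nlinarith : (0:ℝ) ≤ (va * Real.cos a - ua * Real.sin a) * (ub * Real.sin b - vb * Real.cos b))) h21.le
  have t4' : 0 < (va * Real.cos a - ua * Real.sin a) * (vb * Real.cos t2 - ub * Real.sin t2)
      * Real.sin (b - t1) := mul_pos (mul_pos_of_neg_of_neg hYa hYb) hb1
  nlinarith [mul_pos hS1 hS2]

lemma sweep_cross (ua va ub vb t1 t2 : ℝ) :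
    (va * Real.cos t1 - ua * Real.sin t1) * (vb * Real.cos t2 - ub * Real.sin t2)
      - (va * Real.cos t2 - ua * Real.sin t2) * (vb * Real.cos t1 - ub * Real.sin t1)
    = Real.sin (t2 - t1) * (ua * vb - va * ub) := by
  rw [Real.sin_sub]; ring

lemma sweepF_continuous (P : EuclideanSpace ℝ (Fin 2)) (θ : ℝ) :
    Continuous fun x => sweepF P x θ := by
  unfold sweepF
  have h0 : Continuous fun x : EuclideanSpace ℝ (Fin 2) => x 0 :=
    (EuclideanSpace.proj (0 : Fin 2)).continuous
  have h1 : Continuous fun x : EuclideanSpace ℝ (Fin 2) => x 1 :=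
    (EuclideanSpace.proj (1 : Fin 2)).continuous
  fun_prop

lemma sweepF_line_volume (P : EuclideanSpace ℝ (Fin 2)) (θ : ℝ) :
    volume {x : EuclideanSpace ℝ (Fin 2) | sweepF P x θ = 0} = 0 := by
  set n : EuclideanSpace ℝ (Fin 2) := WithLp.toLp 2 ![-Real.sin θ, Real.cos θ] with hn
  have hinner : ∀ x : EuclideanSpace ℝ (Fin 2), ⟪n, x - P⟫ = sweepF P x θ := by
    intro x
    simp [hn, PiLp.inner_apply, Fin.sum_univ_two, RCLike.inner_apply, sweepF]
    ring
  have hn0 : n ≠ 0 := by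
    intro h
    have h1 : n 1 = 0 := by rw [h]; rfl
    have h0 : n 0 = 0 := by rw [h]; rfl
    simp only [hn, PiLp.toLp_apply, Matrix.cons_val_one, Matrix.cons_val_zero, Matrix.head_cons] at h1 h0
    nlinarith [Real.sin_sq_add_cos_sq θ]
  set W : Submodule ℝ (EuclideanSpace ℝ (Fin 2)) := LinearMap.ker (innerSL ℝ n : EuclideanSpace ℝ (Fin 2) →ₗ[ℝ] ℝ) with hW
  have hWne : W ≠ ⊤ := by
    intro h
    have : n ∈ W := h ▸ Submodule.mem_top
    rw [hW, LinearMap.mem_ker] at this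
    simp only [ContinuousLinearMap.coe_coe, innerSL_apply_apply] at this
    exact hn0 (inner_self_eq_zero.mp this)
  have hset : {x : EuclideanSpace ℝ (Fin 2) | sweepF P x θ = 0}
      = (fun x => x + (-P)) ⁻¹' (W : Set (EuclideanSpace ℝ (Fin 2))) := by
    ext x
    simp only [Set.mem_setOf_eq, Set.mem_preimage, SetLike.mem_coe, hW, LinearMap.mem_ker]
    rw [← hinner x]
    simp only [ContinuousLinearMap.coe_coe, innerSL_apply_apply]
    constructor
    · intro h; rw [show x + -P = x - P by abel]; exact h
    · intro h; rw [show x + -P = x - P by abel] at h; exact h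
  rw [hset, measure_preimage_add_right]
  exact Measure.addHaar_submodule volume W hWne

lemma sweepF_lip (P x : EuclideanSpace ℝ (Fin 2)) (R θ θ' : ℝ)
    (h0 : |x 0 - P 0| ≤ R) (h1 : |x 1 - P 1| ≤ R) :
    |sweepF P x θ - sweepF P x θ'| ≤ 2 * R * |θ - θ'| := by
  have hR : 0 ≤ R := le_trans (abs_nonneg _) h0
  have e : sweepF P x θ - sweepF P x θ'
      = (x 1 - P 1) * (Real.cos θ - Real.cos θ') - (x 0 - P 0) * (Real.sin θ - Real.sin θ') := by
    unfold sweepF; ring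
  rw [e]
  calc |(x 1 - P 1) * (Real.cos θ - Real.cos θ') - (x 0 - P 0) * (Real.sin θ - Real.sin θ')|
      ≤ |(x 1 - P 1) * (Real.cos θ - Real.cos θ')| + |(x 0 - P 0) * (Real.sin θ - Real.sin θ')| :=
        abs_sub _ _
    _ = |x 1 - P 1| * |Real.cos θ - Real.cos θ'| + |x 0 - P 0| * |Real.sin θ - Real.sin θ'| := by
        rw [abs_mul, abs_mul]
    _ ≤ R * |θ - θ'| + R * |θ - θ'| := by
        have c1 := abs_cos_sub_cos_le θ θ'
        have s1 := abs_sin_sub_sin_le θ θ'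
        have := mul_le_mul h1 c1 (abs_nonneg _) hR
        have := mul_le_mul h0 s1 (abs_nonneg _) hR
        nlinarith [abs_nonneg (Real.cos θ - Real.cos θ'), abs_nonneg (Real.sin θ - Real.sin θ')]
    _ = 2 * R * |θ - θ'| := by ring

lemma sweepA_continuous (C : Set (EuclideanSpace ℝ (Fin 2))) (hC : MeasurableSet C)
    (hfin : volume C ≠ ⊤) (P : EuclideanSpace ℝ (Fin 2)) (R : ℝ) (hR : 0 < R)
    (hbound : ∀ x ∈ C, |x 0 - P 0| ≤ R ∧ |x 1 - P 1| ≤ R) :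
    Continuous fun θ => (volume (C ∩ {x | 0 ≤ sweepF P x θ})).toReal := by
  rw [continuous_iff_continuousAt]
  intro θ₀
  rw [Metric.continuousAt_iff]
  intro ε hε
  set T : ℕ → Set (EuclideanSpace ℝ (Fin 2)) :=
    fun n => C ∩ {x | |sweepF P x θ₀| ≤ 1 / (n + 1)} with hTdef
  have hTmeas : ∀ n, NullMeasurableSet (T n) volume := by
    intro n
    exact (hC.inter (measurableSet_le ((sweepF_continuous P θ₀).abs.measurable)
      measurable_const)).nullMeasurableSet
  have hTanti : Antitone T := by
    intro m n hmn
    refine Set.inter_subset_inter_right _ (fun x hx => ?_)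
    simp only [Set.mem_setOf_eq] at hx ⊢
    refine le_trans hx ?_
    have h1 : (m:ℝ) + 1 ≤ (n:ℝ) + 1 := by exact_mod_cast by omega
    have h2 : (0:ℝ) < (m:ℝ) + 1 := by positivity
    exact one_div_le_one_div_of_le h2 h1
  have hTfin : ∃ n, volume (T n) ≠ ⊤ :=
    ⟨0, (lt_of_le_of_lt (measure_mono Set.inter_subset_left) (lt_top_iff_ne_top.mpr hfin)).ne⟩
  have hTiter : volume (⋂ n, T n) = 0 := by
    apply measure_mono_null _ (sweepF_line_volume P θ₀)
    intro x hx
    simp only [Set.mem_iInter, hTdef, Set.mem_inter_iff, Set.mem_setOf_eq] at hx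
    simp only [Set.mem_setOf_eq]
    by_contra h
    have habs : 0 < |sweepF P x θ₀| := abs_pos.mpr h
    obtain ⟨n, hn⟩ := exists_nat_one_div_lt habs
    exact absurd ((hx n).2) (not_le.mpr hn)
  have hlim := tendsto_measure_iInter_atTop hTmeas hTanti hTfin
  rw [show (volume (⋂ n, T n)) = 0 from hTiter] at hlim
  have hofr : (0:ℝ≥0∞) < ENNReal.ofReal ε := ENNReal.ofReal_pos.mpr hε
  obtain ⟨n, hn⟩ := (hlim.eventually (gt_mem_nhds hofr)).exists
  refine ⟨1 / ((n + 1) * (2 * R)), by positivity, ?_⟩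
  intro θ hθd
  rw [Real.dist_eq] at hθd
  -- the key bound on |θ - θ₀|
  have hd2 : 2 * R * |θ - θ₀| ≤ 1 / (n + 1) := by
    rw [div_mul_eq_div_div] at hθd
    have h2R : (0:ℝ) < 2 * R := by linarith
    have := (lt_div_iff₀ h2R).mp hθd
    calc 2 * R * |θ - θ₀| = |θ - θ₀| * (2 * R) := by ring
      _ ≤ 1 / (↑n + 1) := by nlinarith [abs_nonneg (θ - θ₀)]
  have hincl1 : C ∩ {x | 0 ≤ sweepF P x θ} ⊆ (C ∩ {x | 0 ≤ sweepF P x θ₀}) ∪ T n := by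
    rintro x ⟨hxC, hx1⟩
    simp only [Set.mem_setOf_eq] at hx1
    by_cases h2 : 0 ≤ sweepF P x θ₀
    · exact Or.inl ⟨hxC, h2⟩
    · push_neg at h2
      refine Or.inr ⟨hxC, ?_⟩
      have hlip := sweepF_lip P x R θ θ₀ (hbound x hxC).1 (hbound x hxC).2
      simp only [Set.mem_setOf_eq]
      rw [abs_of_nonpos h2.le]
      have := le_abs_self (sweepF P x θ - sweepF P x θ₀)
      linarith [abs_nonneg (sweepF P x θ - sweepF P x θ₀)]
  have hincl2 : C ∩ {x | 0 ≤ sweepF P x θ₀} ⊆ (C ∩ {x | 0 ≤ sweepF P x θ}) ∪ T n := by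
    rintro x ⟨hxC, hx1⟩
    simp only [Set.mem_setOf_eq] at hx1
    by_cases h2 : 0 ≤ sweepF P x θ
    · exact Or.inl ⟨hxC, h2⟩
    · push_neg at h2
      refine Or.inr ⟨hxC, ?_⟩
      have hlip := sweepF_lip P x R θ θ₀ (hbound x hxC).1 (hbound x hxC).2
      simp only [Set.mem_setOf_eq]
      rw [abs_of_nonneg hx1]
      have := neg_abs_le (sweepF P x θ - sweepF P x θ₀)
      linarith
  set μ1 := volume (C ∩ {x | 0 ≤ sweepF P x θ}) with hμ1
  set μ2 := volume (C ∩ {x | 0 ≤ sweepF P x θ₀}) with hμ2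
  have hμ1fin : μ1 ≠ ⊤ :=
    (lt_of_le_of_lt (measure_mono Set.inter_subset_left) (lt_top_iff_ne_top.mpr hfin)).ne
  have hμ2fin : μ2 ≠ ⊤ :=
    (lt_of_le_of_lt (measure_mono Set.inter_subset_left) (lt_top_iff_ne_top.mpr hfin)).ne
  have hTnfin : volume (T n) ≠ ⊤ :=
    (lt_of_le_of_lt (measure_mono Set.inter_subset_left) (lt_top_iff_ne_top.mpr hfin)).ne
  have hb1 : μ1 ≤ μ2 + volume (T n) :=
    le_trans (measure_mono hincl1) (measure_union_le _ _)
  have hb2 : μ2 ≤ μ1 + volume (T n) :=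
    le_trans (measure_mono hincl2) (measure_union_le _ _)
  have hr1 : μ1.toReal ≤ μ2.toReal + (volume (T n)).toReal := by
    rw [← ENNReal.toReal_add hμ2fin hTnfin]
    exact ENNReal.toReal_mono (by simp [ENNReal.add_ne_top, hμ2fin, hTnfin]) hb1
  have hr2 : μ2.toReal ≤ μ1.toReal + (volume (T n)).toReal := by
    rw [← ENNReal.toReal_add hμ1fin hTnfin]
    exact ENNReal.toReal_mono (by simp [ENNReal.add_ne_top, hμ1fin, hTnfin]) hb2
  have hTr : (volume (T n)).toReal < ε := by
    have : volume (T n) < ENNReal.ofReal ε := hn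
    exact ENNReal.toReal_lt_of_lt_ofReal this
  rw [Real.dist_eq, abs_sub_lt_iff]
  constructor <;> linarith

lemma sweep_mid_exists (A1 A2 B1 B2 : ℝ) (hA1 : 0 ≤ A1) (hA2 : 0 ≤ A2)
    (hB1 : B1 < 0) (hB2 : B2 < 0) (hAB : A2 * B1 < A1 * B2) :
    ∃ s : ℝ, 0 ≤ s ∧ s ≤ 1 ∧ (1 - s) * A1 + s * B1 < 0 ∧ 0 < (1 - s) * A2 + s * B2 := by
  have hd1 : 0 < A1 - B1 := by linarith
  have hd2 : 0 < A2 - B2 := by linarith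
  have hs12 : A1 / (A1 - B1) < A2 / (A2 - B2) := by
    rw [div_lt_div_iff₀ hd1 hd2]; nlinarith
  have hs1n : 0 ≤ A1 / (A1 - B1) := div_nonneg hA1 hd1.le
  have hs2l : A2 / (A2 - B2) < 1 := by rw [div_lt_one hd2]; linarith
  refine ⟨(A1 / (A1 - B1) + A2 / (A2 - B2)) / 2, by linarith, by linarith, ?_, ?_⟩
  · have h := (div_lt_iff₀ hd1).mp
      (show A1 / (A1 - B1) < (A1 / (A1 - B1) + A2 / (A2 - B2)) / 2 by linarith)
    nlinarith
  · have h := (lt_div_iff₀ hd2).mp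
      (show (A1 / (A1 - B1) + A2 / (A2 - B2)) / 2 < A2 / (A2 - B2) by linarith)
    nlinarith

/-- If the line through `P` sweeps across the compact convex region `C` exactly once
as the angle goes from `α` to `β` (with `β - α < π`), then for every proper fraction
`t ∈ (0,1)` there is a unique angle `θ ∈ [α, β]` at which the swept area equals
`t · area C`. -/
theorem existsUnique_halfplane_area_fraction_of_sweep
    (C : Set (EuclideanSpace ℝ (Fin 2))) (hCcompact : IsCompact C) (hCconv : Convex ℝ C)
    (hCpos : 0 < volume C)
    (P : EuclideanSpace ℝ (Fin 2))
    (H : EuclideanSpace ℝ (Fin 2) → ℝ → Set (EuclideanSpace ℝ (Fin 2)))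
    (hH : ∀ Q θ, H Q θ =
      {x | 0 ≤ ⟪x - Q, (WithLp.toLp 2 ![-Real.sin θ, Real.cos θ] : EuclideanSpace ℝ (Fin 2))⟫})
    (A : ℝ → ℝ≥0∞) (hA : ∀ θ, A θ = volume (C ∩ H P θ))
    (α β : ℝ) (hαβ : α < β) (hπ : β - α < Real.pi)
    (hα : A α = 0) (hβ : A β = volume C)
    (t : ℝ) (ht : t ∈ Set.Ioo (0 : ℝ) 1) :
    ∃! θ : ℝ, θ ∈ Set.Icc α β ∧ A θ = ENNReal.ofReal t * volume C := by
  -- basic reductions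
  have hHset : ∀ θ, H P θ = {x | 0 ≤ sweepF P x θ} := by
    intro θ
    rw [hH]
    ext x
    simp only [Set.mem_setOf_eq]
    rw [show ⟪x - P, (WithLp.toLp 2 ![-Real.sin θ, Real.cos θ] : EuclideanSpace ℝ (Fin 2))⟫ = sweepF P x θ
      from by simp [PiLp.inner_apply, Fin.sum_univ_two, RCLike.inner_apply, sweepF]; ring]
  have hHmeas : ∀ θ, MeasurableSet (H P θ) := fun θ => by
    rw [hHset]
    exact measurableSet_le measurable_const (sweepF_continuous P θ).measurable
  have hCmeas : MeasurableSet C := hCcompact.isClosed.measurableSet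
  have hCfin : volume C ≠ ⊤ := hCcompact.measure_lt_top.ne
  have hA' : ∀ θ, A θ = volume (C ∩ {x | 0 ≤ sweepF P x θ}) := fun θ => by
    rw [hA, hHset]
  have hAfin : ∀ θ, A θ ≠ ⊤ := fun θ =>
    (lt_of_le_of_lt (by rw [hA]; exact measure_mono Set.inter_subset_left)
      (lt_top_iff_ne_top.mpr hCfin)).ne
  -- bound
  obtain ⟨R₀, hR₀⟩ := hCcompact.isBounded.subset_ball P
  set R : ℝ := max R₀ 1 with hRdef
  have hRpos : (0:ℝ) < R := lt_of_lt_of_le one_pos (le_max_right _ _)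
  have hbound : ∀ x ∈ C, |x 0 - P 0| ≤ R ∧ |x 1 - P 1| ≤ R := by
    intro x hx
    have hdist : dist x P < R₀ := Metric.mem_ball.mp (hR₀ hx)
    have hcoord : ∀ i : Fin 2, |x i - P i| ≤ dist x P := by
      intro i
      rw [EuclideanSpace.dist_eq]
      rw [show |x i - P i| = Real.sqrt (dist (x i) (P i) ^ 2) by
        rw [Real.sqrt_sq (dist_nonneg), Real.dist_eq]]
      apply Real.sqrt_le_sqrt
      exact Finset.single_le_sum (f := fun j => dist (x j) (P j) ^ 2)
        (fun _ _ => sq_nonneg _) (Finset.mem_univ i)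
    constructor
    · exact le_trans (hcoord 0) (le_trans hdist.le (le_max_left _ _))
    · exact le_trans (hcoord 1) (le_trans hdist.le (le_max_left _ _))
  -- continuity
  have hconta : Continuous fun θ => (A θ).toReal := by
    have := sweepA_continuous C hCmeas hCfin P R hRpos hbound
    convert this using 2 with θ
    rw [hA']
  -- existence via IVT
  set V : ℝ := (volume C).toReal with hVdef
  have hVpos : 0 < V := ENNReal.toReal_pos hCpos.ne' hCfin
  have htv0 : ENNReal.ofReal t * volume C ≠ 0 :=
    (ENNReal.mul_pos (ENNReal.ofReal_pos.mpr ht.1).ne' hCpos.ne').ne'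
  have htvC : ENNReal.ofReal t * volume C < volume C := by
    calc ENNReal.ofReal t * volume C < 1 * volume C := by
          refine ENNReal.mul_lt_mul_left hCpos.ne' hCfin ?_
          exact ENNReal.ofReal_lt_one.mpr ht.2
      _ = volume C := one_mul _
  have htvfin : ENNReal.ofReal t * volume C ≠ ⊤ := htvC.trans_le le_top |>.ne
  have hexists : ∃ θ ∈ Set.Icc α β, A θ = ENNReal.ofReal t * volume C := by
    have hmemI : t * V ∈ Set.Icc ((fun θ => (A θ).toReal) α) ((fun θ => (A θ).toReal) β) := by
      simp only [hα, hβ, ENNReal.toReal_zero, ← hVdef]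
      constructor
      · exact mul_nonneg ht.1.le hVpos.le
      · nlinarith [ht.1, ht.2]
    obtain ⟨θ, hθI, hθv⟩ := intermediate_value_Icc hαβ.le hconta.continuousOn hmemI
    refine ⟨θ, hθI, ?_⟩
    have h1 : A θ = ENNReal.ofReal (t * V) := by
      rw [← hθv, ENNReal.ofReal_toReal (hAfin θ)]
    rw [h1, ENNReal.ofReal_mul ht.1.le, hVdef, ENNReal.ofReal_toReal hCfin]
  -- uniqueness
  have huniq : ∀ θ₁ θ₂ : ℝ, θ₁ ∈ Set.Icc α β → A θ₁ = ENNReal.ofReal t * volume C →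
      θ₂ ∈ Set.Icc α β → A θ₂ = ENNReal.ofReal t * volume C → θ₁ < θ₂ → False := by
    intro θ₁ θ₂ hI1 hv1 hI2 hv2 h12
    have hθ1α : α < θ₁ := by
      rcases eq_or_lt_of_le hI1.1 with h | h
      · exact absurd (h ▸ hv1) (by rw [← h] at hv1; rw [hα] at hv1; exact fun _ => htv0 hv1.symm)
      · exact h
    have hθ2β : θ₂ < β := by
      rcases eq_or_lt_of_le hI2.2 with h | h
      · rw [h, hβ] at hv2; exact absurd hv2.symm htvC.ne
      · exact h
    -- null sets
    have hN : volume (C ∩ H P α) = 0 := by rw [← hA]; exact hα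
    have hNβ : volume (C \ H P β) = 0 := by
      have hsplit := measure_inter_add_diff (μ := volume) C (hHmeas β)
      rw [← hA, hβ] at hsplit
      have h2 : volume C + volume (C \ H P β) = volume C + 0 := by
        rw [add_zero]; exact hsplit
      exact (ENNReal.add_right_inj hCfin).mp h2
    set D : Set (EuclideanSpace ℝ (Fin 2)) := C \ H P α with hDdef
    have hDθ : ∀ θ, volume (D ∩ H P θ) = A θ := by
      intro θ
      have hseteq : D ∩ H P θ = (C ∩ H P θ) \ (C ∩ H P α) := by
        ext x
        simp only [hDdef, Set.mem_inter_iff, Set.mem_diff]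
        tauto
      rw [hseteq, measure_diff_null hN, hA]
    -- key inclusion
    have hDsub : D ∩ H P θ₁ ⊆ H P θ₂ := by
      rintro x ⟨⟨hxC, hxnα⟩, hx1⟩
      rw [hHset] at hxnα hx1 ⊢
      simp only [Set.mem_setOf_eq] at hxnα hx1 ⊢
      push_neg at hxnα
      exact sweep_key (x 0 - P 0) (x 1 - P 1) α θ₁ θ₂ hθ1α h12.le (by linarith [hI2.2])
        hxnα hx1
    have hE0 : volume ((D ∩ H P θ₂) \ H P θ₁) = 0 := by
      have hsplit := measure_inter_add_diff (μ := volume) (D ∩ H P θ₂) (hHmeas θ₁)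
      have heq : D ∩ H P θ₂ ∩ H P θ₁ = D ∩ H P θ₁ := by
        apply Set.Subset.antisymm
        · rintro x ⟨⟨hD, _⟩, h1⟩; exact ⟨hD, h1⟩
        · rintro x ⟨hD, h1⟩; exact ⟨⟨hD, hDsub ⟨hD, h1⟩⟩, h1⟩
      rw [heq, hDθ θ₁, hDθ θ₂, hv1, hv2] at hsplit
      have h2 : ENNReal.ofReal t * volume C + volume ((D ∩ H P θ₂) \ H P θ₁)
          = ENNReal.ofReal t * volume C + 0 := by rw [add_zero]; exact hsplit
      exact (ENNReal.add_right_inj htvfin).mp h2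
    have hE0' : volume ((C ∩ H P θ₂) \ H P θ₁) = 0 := by
      apply measure_mono_null _ (measure_union_null hE0 hN)
      rintro x ⟨⟨hxC, h2⟩, h1⟩
      by_cases hxα : x ∈ H P α
      · exact Or.inr ⟨hxC, hxα⟩
      · exact Or.inl ⟨⟨⟨hxC, hxα⟩, h2⟩, h1⟩
    -- witnesses
    have hw1 : volume (D ∩ H P θ₁) ≠ 0 := by rw [hDθ, hv1]; exact htv0
    obtain ⟨xa, ⟨⟨hxaC, hxanα⟩, hxa1⟩⟩ := nonempty_of_measure_ne_zero hw1
    have hSb : volume ((C ∩ H P β) \ H P θ₂) ≠ 0 := by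
      intro h0
      have hC2 : volume (C \ H P θ₂) ≠ 0 := by
        intro h0'
        have hsplit := measure_inter_add_diff (μ := volume) C (hHmeas θ₂)
        rw [← hA, hv2, h0', add_zero] at hsplit
        exact htvC.ne hsplit
      apply hC2
      apply measure_mono_null _ (measure_union_null h0 hNβ)
      rintro x ⟨hxC, h2⟩
      by_cases hxβ : x ∈ H P β
      · exact Or.inl ⟨⟨hxC, hxβ⟩, h2⟩
      · exact Or.inr ⟨hxC, hxβ⟩
    obtain ⟨xb, ⟨⟨hxbC, hxbβ⟩, hxb2⟩⟩ := nonempty_of_measure_ne_zero hSb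
    -- sign facts
    rw [hHset] at hxanα hxa1 hxbβ hxb2
    simp only [Set.mem_setOf_eq] at hxanα hxa1 hxbβ hxb2
    push_neg at hxanα hxb2
    simp only [sweepF] at hxanα hxa1 hxbβ hxb2
    have hFa2 : 0 ≤ (xa 1 - P 1) * Real.cos θ₂ - (xa 0 - P 0) * Real.sin θ₂ :=
      sweep_key (xa 0 - P 0) (xa 1 - P 1) α θ₁ θ₂ hθ1α h12.le (by linarith) hxanα hxa1
    have hFb1 : (xb 1 - P 1) * Real.cos θ₁ - (xb 0 - P 0) * Real.sin θ₁ < 0 :=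
      sweep_key' (xb 0 - P 0) (xb 1 - P 1) β θ₁ θ₂ hθ2β h12.le (by linarith) hxbβ hxb2
    have hdet : 0 < (xa 0 - P 0) * (xb 1 - P 1) - (xa 1 - P 1) * (xb 0 - P 0) :=
      sweep_det_pos (xa 0 - P 0) (xa 1 - P 1) (xb 0 - P 0) (xb 1 - P 1) α θ₁ θ₂ β
        hθ1α h12 hθ2β hπ hxanα hxa1 hxb2 hxbβ
    have hsin12 : 0 < Real.sin (θ₂ - θ₁) :=
      Real.sin_pos_of_pos_of_lt_pi (by linarith) (by linarith)
    have hcross := sweep_cross (xa 0 - P 0) (xa 1 - P 1) (xb 0 - P 0) (xb 1 - P 1) θ₁ θ₂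
    have hAB : ((xa 1 - P 1) * Real.cos θ₂ - (xa 0 - P 0) * Real.sin θ₂)
          * ((xb 1 - P 1) * Real.cos θ₁ - (xb 0 - P 0) * Real.sin θ₁)
        < ((xa 1 - P 1) * Real.cos θ₁ - (xa 0 - P 0) * Real.sin θ₁)
          * ((xb 1 - P 1) * Real.cos θ₂ - (xb 0 - P 0) * Real.sin θ₂) := by
      nlinarith [mul_pos hsin12 hdet]
    obtain ⟨s, hs0, hs1', hg1, hg2⟩ := sweep_mid_exists
      ((xa 1 - P 1) * Real.cos θ₁ - (xa 0 - P 0) * Real.sin θ₁)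
      ((xa 1 - P 1) * Real.cos θ₂ - (xa 0 - P 0) * Real.sin θ₂)
      ((xb 1 - P 1) * Real.cos θ₁ - (xb 0 - P 0) * Real.sin θ₁)
      ((xb 1 - P 1) * Real.cos θ₂ - (xb 0 - P 0) * Real.sin θ₂)
      hxa1 hFa2 hFb1 hxb2 hAB
    set z : EuclideanSpace ℝ (Fin 2) := (1 - s) • xa + s • xb with hzdef
    have hzC : z ∈ C := hCconv hxaC hxbC (by linarith) hs0 (by ring)
    have hzc : ∀ θ, sweepF P z θ
        = (1 - s) * ((xa 1 - P 1) * Real.cos θ - (xa 0 - P 0) * Real.sin θ)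
          + s * ((xb 1 - P 1) * Real.cos θ - (xb 0 - P 0) * Real.sin θ) := by
      intro θ
      simp only [hzdef, sweepF, PiLp.add_apply, PiLp.smul_apply, smul_eq_mul]
      ring
    have hz1 : sweepF P z θ₁ < 0 := by rw [hzc]; exact hg1
    have hz2 : 0 < sweepF P z θ₂ := by rw [hzc]; exact hg2
    -- interior point
    have hint : (interior C).Nonempty := by
      by_contra h
      rw [Set.not_nonempty_iff_eq_empty] at h
      have hfr := hCconv.addHaar_frontier volume
      have hle : volume C ≤ volume (frontier C) := by
        apply measure_mono
        rw [frontier, h, Set.diff_empty]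
        exact subset_closure
      rw [hfr] at hle
      exact hCpos.ne' (le_antisymm hle zero_le)
    obtain ⟨w, hw⟩ := hint
    set Vset : Set (EuclideanSpace ℝ (Fin 2)) :=
      {x | sweepF P x θ₁ < 0} ∩ {x | 0 < sweepF P x θ₂} with hVsetdef
    have hVopen : IsOpen Vset :=
      (isOpen_lt (sweepF_continuous P θ₁) continuous_const).inter
        (isOpen_lt continuous_const (sweepF_continuous P θ₂))
    have hzV : z ∈ Vset := ⟨hz1, hz2⟩
    have htend : Filter.Tendsto (fun r : ℝ => z + r • (w - z)) (nhdsWithin 0 (Set.Ioi 0)) (nhds z) := by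
      have hcontf : Continuous fun r : ℝ => z + r • (w - z) :=
        continuous_const.add (continuous_id.smul continuous_const)
      have h1 := (hcontf.tendsto 0).mono_left
        (nhdsWithin_le_nhds (s := Set.Ioi (0:ℝ)))
      simpa using h1
    have hev1 : ∀ᶠ r in nhdsWithin (0:ℝ) (Set.Ioi 0), z + r • (w - z) ∈ Vset :=
      htend.eventually_mem (hVopen.mem_nhds hzV)
    have hev2 : ∀ᶠ r in nhdsWithin (0:ℝ) (Set.Ioi 0), r ∈ Set.Ioc (0:ℝ) 1 :=
      Filter.eventually_of_mem (Ioc_mem_nhdsGT one_pos) (fun _ h => h)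
    obtain ⟨r, hrV, hrI⟩ := (hev1.and hev2).exists
    have hz' : z + r • (w - z) ∈ interior C :=
      hCconv.add_smul_mem_interior hzC (by rwa [show z + (w - z) = w by abel]) hrI
    set U : Set (EuclideanSpace ℝ (Fin 2)) := Vset ∩ interior C with hUdef
    have hUopen : IsOpen U := hVopen.inter isOpen_interior
    have hUne : U.Nonempty := ⟨z + r • (w - z), hrV, hz'⟩
    have hUpos : volume U ≠ 0 := hUopen.measure_ne_zero volume hUne
    apply hUpos
    apply measure_mono_null _ hE0'
    rintro x ⟨⟨hx1, hx2⟩, hxint⟩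
    simp only [Set.mem_setOf_eq] at hx1 hx2
    refine ⟨⟨interior_subset hxint, ?_⟩, ?_⟩
    · rw [hHset]; exact hx2.le
    · rw [hHset]; simp only [Set.mem_setOf_eq]; push_neg; exact hx1
  obtain ⟨θ, hθI, hθv⟩ := hexists
  refine ⟨θ, ⟨hθI, hθv⟩, fun y hy => ?_⟩
  rcases lt_trichotomy y θ with h | h | h
  · exact absurd h (fun h' => huniq y θ hy.1 hy.2 hθI hθv h')
  · exact h
  · exact absurd h (fun h' => huniq θ y hθI hθv hy.1 hy.2 h')
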